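/- Let (θ_k) be the Fast PALM stepsize sequence (θ_0 = 1, (1 − θ_{k+1})/θ_{k+1}² = 1/θ_k², θ_k > 0) and β > 0 fixed. If for each k one has the per-iteration bound E_{k+1}/θ_k² − E_k(1−θ_k)/θ_k² + (1/θ_k)S_{k+1} ≤ (1/2)(a_k − a_{k+1}) + (1/(2θ_k))(b_k − b_{k+1}) + (1/(2θ_k))(c_k − c_{k+1}) with all a_k, b_k, c_k ≥ 0, θ_k ≤ 1, and S_{k+1} arbitrary reals, then for every K: E_{K+1}/θ_K² + ∑_{k=0}^K S_{k+1}/θ_k ≤ (1/2)(a_0 + ∑_{k=0}^K b_k + c_0/θ_0 + ∑_{k=1}^K c_k(1/θ_k − 1/θ_{k-1})) ≤ (1/2)(a_0 + (K+1)max_k b_k + c_0 + K max_k c_k). -/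

import Mathlib

lemma theta_diff (θ : ℕ → ℝ) (hθpos : ∀ k, 0 < θ k)
    (hθrec : ∀ k, (1 - θ (k + 1)) / (θ (k + 1)) ^ 2 = 1 / (θ k) ^ 2) (k : ℕ) :
    1 / θ (k + 1) - 1 / θ k = θ k / (θ k + θ (k + 1)) := by
  have hu := hθpos k
  have hv := hθpos (k + 1)
  have h := hθrec k
  have huv : θ k + θ (k + 1) > 0 := by linarith
  field_simp at h ⊢
  nlinarith [h]

lemma theta_diff_bounds (θ : ℕ → ℝ) (hθpos : ∀ k, 0 < θ k)
    (hθrec : ∀ k, (1 - θ (k + 1)) / (θ (k + 1)) ^ 2 = 1 / (θ k) ^ 2) (k : ℕ) :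
    0 ≤ 1 / θ (k + 1) - 1 / θ k ∧ 1 / θ (k + 1) - 1 / θ k ≤ 1 := by
  rw [theta_diff θ hθpos hθrec k]
  have hu := hθpos k
  have hv := hθpos (k + 1)
  constructor
  · positivity
  · rw [div_le_one (by linarith)]; linarith

lemma telescoped_key (θ : ℕ → ℝ) (hθ0 : θ 0 = 1) (hθpos : ∀ k, 0 < θ k)
    (hθrec : ∀ k, (1 - θ (k + 1)) / (θ (k + 1)) ^ 2 = 1 / (θ k) ^ 2)
    (E S a b c : ℕ → ℝ)
    (hstep : ∀ k,
      E (k + 1) / (θ k) ^ 2 - E k * (1 - θ k) / (θ k) ^ 2 + (1 / θ k) * S (k + 1) ≤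
        1 / 2 * (a k - a (k + 1)) + 1 / (2 * θ k) * (b k - b (k + 1)) +
          1 / (2 * θ k) * (c k - c (k + 1)))
    (K : ℕ) :
    E (K + 1) / (θ K) ^ 2 + ∑ k ∈ Finset.range (K + 1), S (k + 1) / θ k ≤
      1 / 2 * (a 0 - a (K + 1)) +
      1 / 2 * (b 0 / θ 0 + ∑ k ∈ Finset.Icc 1 K, b k * (1 / θ k - 1 / θ (k - 1)) - b (K + 1) / θ K) +
      1 / 2 * (c 0 / θ 0 + ∑ k ∈ Finset.Icc 1 K, c k * (1 / θ k - 1 / θ (k - 1)) - c (K + 1) / θ K) := by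
  induction K with
  | zero =>
      have h := hstep 0
      simp only [Finset.sum_range_one, Finset.Icc_eq_empty_of_lt (by norm_num : (1:ℕ) > 0)]
      simp only [hθ0] at h ⊢
      norm_num [hθ0] at h ⊢
      linarith
  | succ K ih =>
      have h := hstep (K + 1)
      have hE : E (K + 1) / θ K ^ 2 = E (K + 1) * (1 - θ (K + 1)) / θ (K + 1) ^ 2 := by
        rw [mul_div_assoc, hθrec K, mul_one_div]
      rw [Finset.sum_range_succ]
      rw [Finset.sum_Icc_succ_top (by omega : 1 ≤ K + 1) (fun k => b k * (1 / θ k - 1 / θ (k - 1)))]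
      rw [Finset.sum_Icc_succ_top (by omega : 1 ≤ K + 1) (fun k => c k * (1 / θ k - 1 / θ (k - 1)))]
      simp only [Nat.add_sub_cancel]
      have hS : (1 / θ (K + 1)) * S (K + 1 + 1) = S (K + 1 + 1) / θ (K + 1) := by ring
      have hb2 : 1 / (2 * θ (K + 1)) * (b (K + 1) - b (K + 1 + 1)) =
          1 / 2 * (b (K + 1) * (1 / θ (K + 1) - 1 / θ K)) + 1 / 2 * (b (K + 1) / θ K) -
          1 / 2 * (b (K + 1 + 1) / θ (K + 1)) := by ring
      have hc2 : 1 / (2 * θ (K + 1)) * (c (K + 1) - c (K + 1 + 1)) =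
          1 / 2 * (c (K + 1) * (1 / θ (K + 1) - 1 / θ K)) + 1 / 2 * (c (K + 1) / θ K) -
          1 / 2 * (c (K + 1 + 1) / θ (K + 1)) := by ring
      rw [hS, ← hE] at h
      linarith

theorem fast_pladmm_telescoping (θ : ℕ → ℝ) (hθ0 : θ 0 = 1) (hθpos : ∀ k, 0 < θ k)
    (hθrec : ∀ k, (1 - θ (k + 1)) / (θ (k + 1)) ^ 2 = 1 / (θ k) ^ 2)
    (hθle : ∀ k, θ k ≤ 1)
    (β : ℝ) (hβ : 0 < β)
    (E S a b c : ℕ → ℝ)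
    (ha : ∀ k, 0 ≤ a k) (hb : ∀ k, 0 ≤ b k) (hc : ∀ k, 0 ≤ c k)
    (hstep : ∀ k,
      E (k + 1) / (θ k) ^ 2 - E k * (1 - θ k) / (θ k) ^ 2 + (1 / θ k) * S (k + 1) ≤
        1 / 2 * (a k - a (k + 1)) + 1 / (2 * θ k) * (b k - b (k + 1)) +
          1 / (2 * θ k) * (c k - c (k + 1)))
    (K : ℕ) :
    E (K + 1) / (θ K) ^ 2 + ∑ k ∈ Finset.range (K + 1), S (k + 1) / θ k ≤
        1 / 2 * (a 0 + ∑ k ∈ Finset.range (K + 1), b k + c 0 / θ 0 +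
          ∑ k ∈ Finset.Icc 1 K, c k * (1 / θ k - 1 / θ (k - 1))) ∧
      1 / 2 * (a 0 + ∑ k ∈ Finset.range (K + 1), b k + c 0 / θ 0 +
          ∑ k ∈ Finset.Icc 1 K, c k * (1 / θ k - 1 / θ (k - 1))) ≤
        1 / 2 * (a 0 + (K + 1) * (Finset.range (K + 1)).sup' Finset.nonempty_range_add_one b +
          c 0 + K * (Finset.range (K + 1)).sup' Finset.nonempty_range_add_one c) := by
  have hdiff : ∀ i ∈ Finset.Icc 1 K,
      0 ≤ 1 / θ i - 1 / θ (i - 1) ∧ 1 / θ i - 1 / θ (i - 1) ≤ 1 := by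
    intro i hi
    simp only [Finset.mem_Icc] at hi
    obtain ⟨m, rfl⟩ : ∃ m, i = m + 1 := ⟨i - 1, by omega⟩
    simp only [Nat.add_sub_cancel]
    exact theta_diff_bounds θ hθpos hθrec m
  have hrangesplit : ∀ f : ℕ → ℝ,
      ∑ k ∈ Finset.range (K + 1), f k = f 0 + ∑ k ∈ Finset.Icc 1 K, f k := by
    intro f
    have : Finset.range (K + 1) = insert 0 (Finset.Icc 1 K) := by
      ext x; simp [Finset.mem_range, Finset.mem_Icc]; omega
    rw [this, Finset.sum_insert (by simp)]
  have hθKpos := hθpos K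
  constructor
  · have key := telescoped_key θ hθ0 hθpos hθrec E S a b c hstep K
    have hbsum : ∑ k ∈ Finset.Icc 1 K, b k * (1 / θ k - 1 / θ (k - 1)) ≤
        ∑ k ∈ Finset.Icc 1 K, b k := by
      refine Finset.sum_le_sum fun i hi => ?_
      obtain ⟨h1, h2⟩ := hdiff i hi
      nlinarith [hb i]
    have hsplit := hrangesplit b
    have hb0 : b 0 / θ 0 = b 0 := by rw [hθ0, div_one]
    have hbK : 0 ≤ b (K + 1) / θ K := div_nonneg (hb _) hθKpos.le
    have hcK : 0 ≤ c (K + 1) / θ K := div_nonneg (hc _) hθKpos.le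
    linarith [ha (K + 1)]
  · set Mb := (Finset.range (K + 1)).sup' Finset.nonempty_range_add_one b with hMb
    set Mc := (Finset.range (K + 1)).sup' Finset.nonempty_range_add_one c with hMc
    have hBsum : ∑ k ∈ Finset.range (K + 1), b k ≤ (K + 1 : ℝ) * Mb := by
      calc ∑ k ∈ Finset.range (K + 1), b k
          ≤ (Finset.range (K + 1)).card • Mb :=
            Finset.sum_le_card_nsmul _ _ _ fun i hi => Finset.le_sup' b hi
        _ = (K + 1 : ℝ) * Mb := by
            rw [Finset.card_range, nsmul_eq_mul]; push_cast; ring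
    have hCsum : ∑ k ∈ Finset.Icc 1 K, c k * (1 / θ k - 1 / θ (k - 1)) ≤ (K : ℝ) * Mc := by
      calc ∑ k ∈ Finset.Icc 1 K, c k * (1 / θ k - 1 / θ (k - 1))
          ≤ (Finset.Icc 1 K).card • Mc := by
            refine Finset.sum_le_card_nsmul _ _ _ fun i hi => ?_
            obtain ⟨h1, h2⟩ := hdiff i hi
            have hiMc : c i ≤ Mc := by
              refine Finset.le_sup' c ?_
              simp only [Finset.mem_Icc] at hi
              simp [Finset.mem_range]; omega
            nlinarith [hc i]
        _ = (K : ℝ) * Mc := by rw [Nat.card_Icc, nsmul_eq_mul]; push_cast; ring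
    have hc0 : c 0 / θ 0 = c 0 := by rw [hθ0, div_one]
    linarith
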